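/- Let S be a finite generating subset of a group G with 1 ∈ S and S ≠ G, and consider the Cayley graph Cay(G,S). If Cay(G,S) is 1-faithful and H is a 1-atom of Cay(G,S) with 1 ∈ H, then H is a finite subgroup of G, and |H| divides κ₁(Cay(G,S)). -/

import Mathlib

open Set Pointwise

/-- S_1 for the Cayley graph Γ(X) = XS: finite nonempty X with |XS| ≤ |G| − 1. -/
def S1Mul {G : Type*} [Group G] (S : Set G) : Set (Set G) :=
  {X | X.Nonempty ∧ X.Finite ∧ ∃ y, y ∉ X * S}

noncomputable def kappa1Mul {G : Type*} [Group G] (S : Set G) : ℕ :=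
  sInf ((fun X => (X * S).ncard - X.ncard) '' S1Mul S)

def Is1FragmentMul {G : Type*} [Group G] (S X : Set G) : Prop :=
  X ∈ S1Mul S ∧ (X * S).ncard - X.ncard = kappa1Mul S

def Is1AtomMul {G : Type*} [Group G] (S X : Set G) : Prop :=
  Is1FragmentMul S X ∧ ∀ Y, Is1FragmentMul S Y → X.ncard ≤ Y.ncard

/-- The Cayley graph of S is 1-faithful: a 1-atom A satisfies |A| ≤ |G \ AS|. -/
def Faithful1Mul {G : Type*} [Group G] (S : Set G) : Prop :=
  ∀ A : Set G, Is1AtomMul S A → ((A * S)ᶜ).Infinite ∨ A.ncard ≤ ((A * S)ᶜ).ncard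

section Aux

variable {G : Type*} [Group G] {S : Set G}

lemma subset_mulS (h1 : (1 : G) ∈ S) (X : Set G) : X ⊆ X * S :=
  fun x hx => ⟨x, hx, 1, h1, mul_one x⟩

lemma smul_mem_S1Mul (g : G) {X : Set G} (hX : X ∈ S1Mul S) : g • X ∈ S1Mul S := by
  obtain ⟨hne, hfin, y, hy⟩ := hX
  refine ⟨hne.smul_set, hfin.smul_set, g * y, fun hmem => hy ?_⟩
  rw [smul_mul_assoc] at hmem
  have : g • y ∈ g • (X * S) := by simpa [smul_eq_mul] using hmem
  exact (Set.smul_mem_smul_set_iff).mp this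

lemma kappa_smul (g : G) (X : Set G) :
    ((g • X) * S).ncard - (g • X).ncard = (X * S).ncard - X.ncard := by
  rw [smul_mul_assoc, Set.ncard_smul_set, Set.ncard_smul_set]

lemma smul_atom (g : G) {X : Set G} (hX : Is1AtomMul S X) : Is1AtomMul S (g • X) := by
  refine ⟨⟨smul_mem_S1Mul g hX.1.1, by rw [kappa_smul]; exact hX.1.2⟩, fun Y hY => ?_⟩
  rw [Set.ncard_smul_set]
  exact hX.2 Y hY

lemma kappa_le {X : Set G} (hX : X ∈ S1Mul S) :
    kappa1Mul S ≤ (X * S).ncard - X.ncard :=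
  Nat.sInf_le ⟨X, hX, rfl⟩

lemma kappa_le' (hSfin : S.Finite) (h1 : (1 : G) ∈ S) {X : Set G} (hX : X ∈ S1Mul S) :
    X.ncard + kappa1Mul S ≤ (X * S).ncard := by
  have hfin : (X * S).Finite := hX.2.1.mul hSfin
  have h := Set.ncard_le_ncard (subset_mulS h1 X) hfin
  have := kappa_le hX
  omega

/-- Two 1-atoms that intersect are equal. -/
lemma atom_inter_eq (hSfin : S.Finite) (h1 : (1 : G) ∈ S) (hfaith : Faithful1Mul S)
    {A B : Set G} (hA : Is1AtomMul S A) (hB : Is1AtomMul S B)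
    (hAB : (A ∩ B).Nonempty) : A = B := by
  set k := kappa1Mul S with hk
  have finA : A.Finite := hA.1.1.2.1
  have finB : B.Finite := hB.1.1.2.1
  have finAS : (A * S).Finite := finA.mul hSfin
  have finBS : (B * S).Finite := finB.mul hSfin
  have hcard : B.ncard = A.ncard := le_antisymm (hB.2 A hA.1) (hA.2 B hB.1)
  have cardAS : (A * S).ncard = A.ncard + k := by
    have h := Set.ncard_le_ncard (subset_mulS h1 A) finAS
    have := hA.1.2; omega
  have cardBS : (B * S).ncard = B.ncard + k := by
    have h := Set.ncard_le_ncard (subset_mulS h1 B) finBS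
    have := hB.1.2; omega
  have hIsub : (A ∩ B) * S ⊆ (A * S) ∩ (B * S) :=
    subset_inter (mul_subset_mul_right inter_subset_left)
      (mul_subset_mul_right inter_subset_right)
  have hIS1 : A ∩ B ∈ S1Mul S := by
    obtain ⟨y, hy⟩ := hA.1.1.2.2
    exact ⟨hAB, finA.inter_of_left B, y,
      fun hmem => hy (mul_subset_mul_right inter_subset_left hmem)⟩
  have hI : (A ∩ B).ncard + k ≤ ((A ∩ B) * S).ncard := kappa_le' hSfin h1 hIS1
  -- submodularity
  have hUeq : (A ∪ B) * S = (A * S) ∪ (B * S) := Set.union_mul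
  have hsub1 : ((A ∪ B) * S).ncard + ((A ∩ B) * S).ncard ≤ (A * S).ncard + (B * S).ncard := by
    have h2 : ((A ∩ B) * S).ncard ≤ ((A * S) ∩ (B * S)).ncard :=
      Set.ncard_le_ncard hIsub (finAS.inter_of_left _)
    have h3 := Set.ncard_union_add_ncard_inter (A * S) (B * S) finAS finBS
    rw [hUeq]
    omega
  by_cases hU : ∃ y, y ∉ (A ∪ B) * S
  · obtain ⟨y, hy⟩ := hU
    have hUS1 : A ∪ B ∈ S1Mul S :=
      ⟨hAB.mono inter_subset_left |>.mono subset_union_left, finA.union finB, y, hy⟩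
    have hU2 : (A ∪ B).ncard + k ≤ ((A ∪ B) * S).ncard := kappa_le' hSfin h1 hUS1
    have hUI := Set.ncard_union_add_ncard_inter A B finA finB
    have hfragI : Is1FragmentMul S (A ∩ B) := by
      refine ⟨hIS1, ?_⟩
      have hle : ((A ∩ B) * S).ncard ≤ (A ∩ B).ncard + k := by omega
      omega
    have h4 : A.ncard ≤ (A ∩ B).ncard := hA.2 _ hfragI
    have h5 : B.ncard ≤ (A ∩ B).ncard := hB.2 _ hfragI
    have e1 : A ∩ B = A := Set.eq_of_subset_of_ncard_le inter_subset_left h4 finA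
    have e2 : A ∩ B = B := Set.eq_of_subset_of_ncard_le inter_subset_right h5 finB
    rw [← e1, e2]
  · push_neg at hU
    have huniv : (A ∪ B) * S = univ := eq_univ_of_forall hU
    have hGfin : (univ : Set G).Finite := huniv ▸ (finA.union finB).mul hSfin
    haveI : Finite G := Set.finite_univ_iff.mp hGfin
    have hfa : A.ncard ≤ ((A * S)ᶜ).ncard := by
      rcases hfaith A hA with h | h
      · exact (h (Set.toFinite _)).elim
      · exact h
    have hcompl : (A * S).ncard + ((A * S)ᶜ).ncard = Nat.card G :=
      Set.ncard_add_ncard_compl (A * S) (Set.toFinite _) (Set.toFinite _)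
    have hIpos : 1 ≤ (A ∩ B).ncard := (Set.ncard_pos (finA.inter_of_left B)).mpr hAB
    have hunivcard : ((A ∪ B) * S).ncard = Nat.card G := by
      rw [huniv, Set.ncard_univ]
    omega

end Aux

theorem stmt6 {G : Type*} [Group G] (S : Set G) (hSfin : S.Finite) (h1 : (1 : G) ∈ S)
    (hgen : Subgroup.closure S = ⊤) (hproper : S ≠ Set.univ)
    (hfaith : Faithful1Mul S)
    (H : Set G) (hH : Is1AtomMul S H) (h1H : (1 : G) ∈ H) :
    (∃ H' : Subgroup G, H = ↑H') ∧ H.ncard ∣ kappa1Mul S := by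
  have key : ∀ h ∈ H, h • H = H := by
    intro h hh
    refine atom_inter_eq hSfin h1 hfaith (smul_atom h hH) hH ⟨h, ?_, hh⟩
    exact ⟨1, h1H, mul_one h⟩
  have hmul : ∀ a ∈ H, ∀ b ∈ H, a * b ∈ H := by
    intro a ha b hb
    have : a * b ∈ a • H := ⟨b, hb, rfl⟩
    rwa [key a ha] at this
  have hinv : ∀ a ∈ H, a⁻¹ ∈ H := by
    intro a ha
    have h2 : a⁻¹ • H = H := by
      conv_lhs => rw [← key a ha]
      rw [smul_smul, inv_mul_cancel, one_smul]
    rw [← h2]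
    exact ⟨1, h1H, mul_one a⁻¹⟩
  have hHH : H * H = H := by
    refine subset_antisymm ?_ ?_
    · rintro x ⟨a, ha, b, hb, rfl⟩
      exact hmul a ha b hb
    · exact fun x hx => ⟨x, hx, 1, h1H, mul_one x⟩
  constructor
  · exact ⟨{ carrier := H, mul_mem' := fun ha hb => hmul _ ha _ hb,
             one_mem' := h1H, inv_mem' := fun ha => hinv _ ha }, rfl⟩
  · -- H.ncard divides (H*S).ncard
    have finH : H.Finite := hH.1.1.2.1
    have hdvd : ∀ X : Set G, X.Finite → H.ncard ∣ (H * X).ncard := by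
      intro X hX
      refine Set.Finite.induction_on (motive := fun X _ => H.ncard ∣ (H * X).ncard) X hX (by simp) ?_
      clear hX X
      intro a X haX hXfin ih
      have hins : H * insert a X = H * {a} ∪ H * X := by
        rw [← Set.singleton_union, Set.mul_union]
      by_cases hcap : ((H * {a}) ∩ (H * X)).Nonempty
      · obtain ⟨z, ⟨p, hp, q, hq, rfl⟩, hz2⟩ := hcap
        rw [Set.mem_singleton_iff] at hq
        rw [hq] at hz2
        have hsub : H * {a} ⊆ H * X := by
          rintro w ⟨p', hp', q', hq', rfl⟩
          rw [Set.mem_singleton_iff] at hq'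
          rw [hq']
          show p' * a ∈ H * X
          have : p' * a = (p' * p⁻¹) * (p * a) := by group
          rw [this]
          have hmem : p' * p⁻¹ ∈ H := hmul _ hp' _ (hinv _ hp)
          have : (p' * p⁻¹) * (p * a) ∈ H * (H * X) :=
            ⟨p' * p⁻¹, hmem, p * a, hz2, rfl⟩
          rwa [← mul_assoc, hHH] at this
        rw [hins, Set.union_eq_self_of_subset_left hsub]
        exact ih
      · rw [Set.not_nonempty_iff_eq_empty] at hcap
        have hdisj : Disjoint (H * {a}) (H * X) := Set.disjoint_iff_inter_eq_empty.mpr hcap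
        have hfin1 : (H * ({a} : Set G)).Finite := finH.mul (Set.finite_singleton a)
        have hfin2 : (H * X).Finite := finH.mul hXfin
        rw [hins, Set.ncard_union_eq hdisj hfin1 hfin2]
        have hcard1 : (H * ({a} : Set G)).ncard = H.ncard := by
          rw [Set.mul_singleton]
          exact Set.ncard_image_of_injective _ (mul_left_injective a)
        rw [hcard1]
        exact Nat.dvd_add (dvd_refl _) ih
    have h2 : H.ncard ∣ (H * S).ncard := hdvd S hSfin
    rw [← hH.1.2]
    exact Nat.dvd_sub h2 (dvd_refl _)
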